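/- arXiv:1809.04808 — 2 statements merged into one kernel-verified Lean document; each statement's English description precedes it below -/
import Mathlib

section
/- Every strongly regular ROC curve is the uniform limit of a sequence of mixtures of Beta CDFs: if R : [0,1] → [0,1] is continuously differentiable with bounded derivative, R(0)=0, R(1)=1, and R nondecreasing, then there exist mixtures R_n(p) = ∑_k w_{n,k} B_{α_{n,k},β_{n,k}}(p) with nonnegative weights summing to 1 converging to R uniformly on [0,1]. -/
/-- The CDF of the Beta(α,β) distribution, as normalized incomplete beta integral. -/
noncomputable def betaCDF (α β : ℝ) (p : ℝ) : ℝ :=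
  (∫ q in (0:ℝ)..p, q ^ (α - 1) * (1 - q) ^ (β - 1)) /
    (∫ q in (0:ℝ)..1, q ^ (α - 1) * (1 - q) ^ (β - 1))

open intervalIntegral Finset

lemma betaAux_cont (k m : ℕ) : Continuous (fun x : ℝ => x ^ k * (1 - x) ^ m) := by
  continuity

lemma betaAux_step (k m : ℕ) :
    ((k:ℝ)+1) * ∫ x in (0:ℝ)..1, x ^ k * (1-x) ^ (m+1)
      = ((m:ℝ)+1) * ∫ x in (0:ℝ)..1, x ^ (k+1) * (1-x) ^ m := by
  have hFT : ∫ x in (0:ℝ)..1,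
      (((k:ℝ)+1) * (x ^ k * (1-x) ^ (m+1)) - ((m:ℝ)+1) * (x ^ (k+1) * (1-x) ^ m)) = 0 := by
    rw [integral_eq_sub_of_hasDerivAt (f := fun x : ℝ => x ^ (k+1) * (1-x) ^ (m+1))]
    · simp
    · intro x _
      have h1 : HasDerivAt (fun x : ℝ => x ^ (k+1)) (((k:ℝ)+1) * x ^ k) x := by
        simpa using hasDerivAt_pow (k+1) x
      have h2 : HasDerivAt (fun x : ℝ => (1-x) ^ (m+1)) (-(((m:ℝ)+1) * (1-x) ^ m)) x := by
        have := (hasDerivAt_pow (m+1) (1-x)).comp x ((hasDerivAt_id x).const_sub 1)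
        simpa [mul_comm, Function.comp_def] using this
      have := h1.fun_mul h2
      refine this.congr_deriv ?_
      push_cast
      ring
    · exact ((continuous_const.mul (betaAux_cont k (m+1))).sub
        (continuous_const.mul (betaAux_cont (k+1) m))).intervalIntegrable _ _
  have h1 : IntervalIntegrable (fun x : ℝ => ((k:ℝ)+1) * (x ^ k * (1-x) ^ (m+1)))
      MeasureTheory.volume 0 1 :=
    (continuous_const.mul (betaAux_cont k (m+1))).intervalIntegrable _ _
  have h2 : IntervalIntegrable (fun x : ℝ => ((m:ℝ)+1) * (x ^ (k+1) * (1-x) ^ m))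
      MeasureTheory.volume 0 1 :=
    (continuous_const.mul (betaAux_cont (k+1) m)).intervalIntegrable _ _
  rw [integral_sub h1 h2, integral_const_mul, integral_const_mul] at hFT
  linarith

lemma betaAux (k m : ℕ) :
    ∫ x in (0:ℝ)..1, x ^ k * (1-x) ^ m
      = (k.factorial * m.factorial : ℝ) / (k+m+1).factorial := by
  induction m generalizing k with
  | zero =>
      simp only [pow_zero, mul_one, integral_pow]
      rw [Nat.factorial]
      push_cast [Nat.factorial_succ]
      field_simp
      simp
  | succ m ih =>
      have hk : ((k:ℝ)+1) ≠ 0 := by positivity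
      have hstep := betaAux_step k m
      rw [ih (k+1)] at hstep
      have : ∫ x in (0:ℝ)..1, x ^ k * (1-x) ^ (m+1)
          = ((m:ℝ)+1) * ((k+1).factorial * m.factorial : ℝ) / ((k+1+m+1).factorial * ((k:ℝ)+1)) := by
        field_simp at hstep ⊢
        linarith
      rw [this]
      have h1 : ((k+1).factorial : ℝ) = ((k:ℝ)+1) * k.factorial := by
        push_cast [Nat.factorial_succ]; ring
      have h2 : ((m+1).factorial : ℝ) = ((m:ℝ)+1) * m.factorial := by
        push_cast [Nat.factorial_succ]; ring
      have h3 : (k+1+m+1) = (k+(m+1)+1) := by ring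
      rw [h1, h3, h2]
      field_simp

lemma betaAux_pos (k m : ℕ) : 0 < ∫ x in (0:ℝ)..1, x ^ k * (1-x) ^ m := by
  rw [betaAux]
  positivity

lemma betaCDF_nat (k m : ℕ) (p : ℝ) :
    betaCDF ((k:ℝ)+1) ((m:ℝ)+1) p
      = ((k+m+1).factorial : ℝ) / (k.factorial * m.factorial)
          * ∫ x in (0:ℝ)..p, x ^ k * (1-x) ^ m := by
  have hk : (0:ℝ) < k.factorial := by positivity
  have hm : (0:ℝ) < m.factorial := by positivity
  unfold betaCDF
  simp only [add_sub_cancel_right, Real.rpow_natCast]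
  rw [betaAux, div_div_eq_mul_div]
  ring

open Filter Topology

/-- every strongly regular ROC curve (nondecreasing, continuously
differentiable with bounded derivative, R(0)=0, R(1)=1, values in [0,1]) is the
uniform limit of mixtures of Beta CDFs with nonnegative weights summing to 1. -/
theorem strongly_regular_roc_uniform_limit_of_beta_mixtures
    (R R' : ℝ → ℝ)
    (hmono : MonotoneOn R (Set.Icc (0:ℝ) 1))
    (hmaps : ∀ p ∈ Set.Icc (0:ℝ) 1, R p ∈ Set.Icc (0:ℝ) 1)
    (hR0 : R 0 = 0) (hR1 : R 1 = 1)
    (hderiv : ∀ p ∈ Set.Icc (0:ℝ) 1, HasDerivAt R (R' p) p)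
    (hderivcont : ContinuousOn R' (Set.Icc (0:ℝ) 1))
    (hbdd : ∃ M : ℝ, ∀ p ∈ Set.Icc (0:ℝ) 1, |R' p| ≤ M) :
    ∃ (N : ℕ → ℕ) (w a b : ℕ → ℕ → ℝ),
      (∀ n, ∀ k ∈ Finset.range (N n), 0 ≤ w n k ∧ 0 < a n k ∧ 0 < b n k) ∧
      (∀ n, ∑ k ∈ Finset.range (N n), w n k = 1) ∧
      TendstoUniformlyOn
        (fun (n : ℕ) (p : ℝ) => ∑ k ∈ Finset.range (N n), w n k * betaCDF (a n k) (b n k) p)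
        R Filter.atTop (Set.Icc (0:ℝ) 1) := by
  classical
  -- membership of grid points
  have hgrid : ∀ n k : ℕ, k ≤ n + 1 → (k:ℝ)/((n:ℝ)+1) ∈ Set.Icc (0:ℝ) 1 := by
    intro n k hk
    constructor
    · positivity
    · rw [div_le_one (by positivity)]
      exact_mod_cast by exact_mod_cast hk
  -- MVT selection
  have hmvt : ∀ n k : ℕ, k ≤ n → ∃ ξ ∈ Set.Icc ((k:ℝ)/((n:ℝ)+1)) (((k:ℝ)+1)/((n:ℝ)+1)),
      R (((k:ℝ)+1)/((n:ℝ)+1)) - R ((k:ℝ)/((n:ℝ)+1)) = R' ξ / ((n:ℝ)+1) := by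
    intro n k hk
    have hab : (k:ℝ)/((n:ℝ)+1) < ((k:ℝ)+1)/((n:ℝ)+1) := by
      have hpos : (0:ℝ) < (n:ℝ)+1 := by positivity
      gcongr
      · linarith
    have hsub : Set.Icc ((k:ℝ)/((n:ℝ)+1)) (((k:ℝ)+1)/((n:ℝ)+1)) ⊆ Set.Icc (0:ℝ) 1 := by
      apply Set.Icc_subset_Icc
      · exact (hgrid n k (by omega)).1
      · have := hgrid n (k+1) (by omega)
        push_cast at this
        exact this.2
    have hcont : ContinuousOn R (Set.Icc ((k:ℝ)/((n:ℝ)+1)) (((k:ℝ)+1)/((n:ℝ)+1))) :=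
      fun x hx => ((hderiv x (hsub hx)).continuousAt).continuousWithinAt
    obtain ⟨c, hc, hc2⟩ := exists_hasDerivAt_eq_slope R R' hab hcont
      (fun x hx => hderiv x (hsub (Set.Ioo_subset_Icc_self hx)))
    refine ⟨c, Set.Ioo_subset_Icc_self hc, ?_⟩
    have hne : ((n:ℝ)+1) ≠ 0 := by positivity
    rw [hc2]
    field_simp
    ring
  choose! ξ hξmem hξeq using hmvt
  refine ⟨fun n => n+1, fun n k => R (((k:ℝ)+1)/((n:ℝ)+1)) - R ((k:ℝ)/((n:ℝ)+1)),
    fun _ k => (k:ℝ)+1, fun n k => ((n-k : ℕ):ℝ)+1, ?_, ?_, ?_⟩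
  · intro n k hk
    have hkn : k ≤ n := by simpa [Nat.lt_succ_iff] using Finset.mem_range.mp hk
    refine ⟨?_, by positivity, by positivity⟩
    have h1 := hgrid n k (by omega)
    have h2 := hgrid n (k+1) (by omega)
    push_cast at h2
    have hle : (k:ℝ)/((n:ℝ)+1) ≤ ((k:ℝ)+1)/((n:ℝ)+1) := by
      gcongr <;> linarith
    have := hmono h1 h2 hle
    linarith
  · intro n
    have h := Finset.sum_range_sub (fun k : ℕ => R ((k:ℝ)/((n:ℝ)+1))) (n+1)
    push_cast at h
    rw [h]
    have hne : ((n:ℝ)+1) ≠ 0 := by positivity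
    rw [div_self hne, hR1]
    norm_num [hR0]
  · -- uniform convergence
    rw [Metric.tendstoUniformlyOn_iff]
    intro ε hε
    have hε3 : 0 < ε/3 := by linarith
    set f : C(unitInterval, ℝ) := ⟨(Set.Icc (0:ℝ) 1).restrict R', hderivcont.restrict⟩ with hfdef
    have hBn : ∀ᶠ n : ℕ in atTop, ‖bernsteinApproximation n f - f‖ < ε/3 := by
      have h := bernsteinApproximation_uniform f
      rw [Metric.tendsto_nhds] at h
      filter_upwards [h (ε/3) hε3] with n hn
      rwa [dist_eq_norm] at hn
    obtain ⟨δ, hδpos, hδ⟩ : ∃ δ > 0, ∀ x ∈ Set.Icc (0:ℝ) 1, ∀ y ∈ Set.Icc (0:ℝ) 1,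
        dist x y < δ → dist (R' x) (R' y) < ε/3 := by
      have h := isCompact_Icc.uniformContinuousOn_of_continuous hderivcont
      rw [Metric.uniformContinuousOn_iff] at h
      obtain ⟨δ, hδpos, hδ⟩ := h (ε/3) hε3
      exact ⟨δ, hδpos, hδ⟩
    have hsmall : ∀ᶠ n : ℕ in atTop, (1:ℝ)/n < δ :=
      tendsto_one_div_atTop_nhds_zero_nat.eventually (gt_mem_nhds hδpos)
    filter_upwards [hBn, hsmall, eventually_ge_atTop 1] with n hB hsm hn1
    intro p hp
    have hnpos : (0:ℝ) < n := by exact_mod_cast hn1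
    -- properties of the ξ
    have hξIcc : ∀ k, k ≤ n → ξ n k ∈ Set.Icc (0:ℝ) 1 := by
      intro k hk
      obtain ⟨h1, h2⟩ := hξmem n k hk
      constructor
      · exact le_trans (hgrid n k (by omega)).1 h1
      · refine le_trans h2 ?_
        have := hgrid n (k+1) (by omega)
        push_cast at this
        exact this.2
    have hnode : ∀ k, k ≤ n → |ξ n k - (k:ℝ)/n| ≤ 1/n := by
      intro k hk
      obtain ⟨h1, h2⟩ := hξmem n k hk
      have hkr : (k:ℝ) ≤ n := by exact_mod_cast hk
      rw [abs_sub_le_iff]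
      constructor
      · have hub : ξ n k ≤ ((k:ℝ)+1)/n := le_trans h2 (by gcongr <;> linarith)
        have : ((k:ℝ)+1)/n - (k:ℝ)/n = 1/n := by field_simp; ring
        linarith
      · have hlb : (k:ℝ)/n - (k:ℝ)/((n:ℝ)+1) ≤ 1/n := by
          rw [div_sub_div _ _ (ne_of_gt hnpos) (by positivity), div_le_div_iff₀ (by positivity) hnpos]
          nlinarith
        linarith
    -- the comparison polynomial
    set S : ℝ → ℝ := fun q => ∑ k ∈ Finset.range (n+1),
      R' (ξ n k) * ((n.choose k : ℝ) * (q^k * (1-q)^(n-k))) with hSdef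
    have hScont : Continuous S := by
      apply continuous_finset_sum
      intro k _
      exact continuous_const.mul (continuous_const.mul
        ((continuous_pow k).mul ((continuous_const.sub continuous_id).pow (n-k))))
    -- key identity
    have hid : (∑ k ∈ Finset.range (n+1),
        (R (((k:ℝ)+1)/((n:ℝ)+1)) - R ((k:ℝ)/((n:ℝ)+1))) * betaCDF ((k:ℝ)+1) (((n-k:ℕ):ℝ)+1) p)
        = ∫ q in (0:ℝ)..p, S q := by
      have hterm : ∀ k ∈ Finset.range (n+1),
          (R (((k:ℝ)+1)/((n:ℝ)+1)) - R ((k:ℝ)/((n:ℝ)+1))) * betaCDF ((k:ℝ)+1) (((n-k:ℕ):ℝ)+1) p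
          = ∫ q in (0:ℝ)..p, R' (ξ n k) * ((n.choose k : ℝ) * (q^k * (1-q)^(n-k))) := by
        intro k hk
        have hkn : k ≤ n := by simpa [Nat.lt_succ_iff] using Finset.mem_range.mp hk
        rw [hξeq n k hkn, betaCDF_nat k (n-k) p, intervalIntegral.integral_const_mul]
        have hchoose : ((k+(n-k)+1).factorial : ℝ) / ((k.factorial : ℝ) * ((n-k).factorial : ℝ))
            = ((n:ℝ)+1) * (n.choose k : ℝ) := by
          have h1 : k + (n-k) = n := Nat.add_sub_cancel' hkn
          rw [h1]
          have h2 := Nat.choose_mul_factorial_mul_factorial hkn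
          have hkf : (0:ℝ) < (k.factorial : ℝ) := by positivity
          have hmf : (0:ℝ) < ((n-k).factorial : ℝ) := by positivity
          rw [div_eq_iff (by positivity), Nat.factorial_succ]
          push_cast [← h2]
          ring
        rw [hchoose]
        have hne : ((n:ℝ)+1) ≠ 0 := by positivity
        field_simp
        simp only [mul_assoc, intervalIntegral.integral_const_mul]
      rw [Finset.sum_congr rfl hterm, hSdef, ← intervalIntegral.integral_finset_sum]
      intro k _
      exact (continuous_const.mul (continuous_const.mul
        ((continuous_pow k).mul ((continuous_const.sub continuous_id).pow (n-k))))).intervalIntegrable _ _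
    -- pointwise bound |S q - R' q| on [0,1]
    have hdiff : ∀ q, ∀ hq : q ∈ Set.Icc (0:ℝ) 1, |S q - R' q| ≤ ε/3 + ε/3 := by
      intro q hq
      have hq0 : (0:ℝ) ≤ q := hq.1
      have hq1 : q ≤ 1 := hq.2
      have hone : ∑ k ∈ Finset.range (n+1), (n.choose k : ℝ) * (q^k * (1-q)^(n-k)) = 1 := by
        have h := add_pow q (1-q) n
        have h2 : ((q + (1-q)) : ℝ)^n = 1 := by norm_num
        rw [h2] at h
        conv_rhs => rw [h]
        apply Finset.sum_congr rfl
        intro k _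
        ring
      have hBform : bernsteinApproximation n f ⟨q, hq⟩
          = ∑ k ∈ Finset.range (n+1), R' ((k:ℝ)/n) * ((n.choose k : ℝ) * (q^k * (1-q)^(n-k))) := by
        simp only [bernsteinApproximation, ContinuousMap.sum_apply, ContinuousMap.smul_apply,
          smul_eq_mul, bernstein_apply]
        rw [Finset.sum_range
          (fun k : ℕ => R' ((k:ℝ)/n) * ((n.choose k : ℝ) * (q^k * (1-q)^(n-k))))]
        apply Finset.sum_congr rfl
        intro i _
        simp only [ContinuousMap.mul_apply, ContinuousMap.const_apply, bernstein_apply]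
        rw [show f (bernstein.z i) = R' ((i:ℝ)/n) from rfl]
        ring
      have hBclose : |bernsteinApproximation n f ⟨q, hq⟩ - R' q| ≤ ε/3 := by
        have h1 : ‖(bernsteinApproximation n f - f) ⟨q, hq⟩‖ ≤ ‖bernsteinApproximation n f - f‖ :=
          ContinuousMap.norm_coe_le_norm _ _
        rw [ContinuousMap.sub_apply, Real.norm_eq_abs] at h1
        have hfq : f ⟨q, hq⟩ = R' q := rfl
        rw [hfq] at h1
        exact h1.trans hB.le
      have hSB : |S q - bernsteinApproximation n f ⟨q, hq⟩| ≤ ε/3 := by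
        rw [hBform, hSdef, ← Finset.sum_sub_distrib]
        have hbnd : ∀ k ∈ Finset.range (n+1),
            |R' (ξ n k) * ((n.choose k : ℝ) * (q^k * (1-q)^(n-k)))
              - R' ((k:ℝ)/n) * ((n.choose k : ℝ) * (q^k * (1-q)^(n-k)))|
            ≤ (ε/3) * ((n.choose k : ℝ) * (q^k * (1-q)^(n-k))) := by
          intro k hk
          have hkn : k ≤ n := by simpa [Nat.lt_succ_iff] using Finset.mem_range.mp hk
          have hb0 : (0:ℝ) ≤ (n.choose k : ℝ) * (q^k * (1-q)^(n-k)) :=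
            mul_nonneg (by positivity)
              (mul_nonneg (pow_nonneg hq0 _) (pow_nonneg (by linarith) _))
          rw [← sub_mul, abs_mul, abs_of_nonneg hb0]
          apply mul_le_mul_of_nonneg_right _ hb0
          have hkIcc : (k:ℝ)/n ∈ Set.Icc (0:ℝ) 1 := by
            constructor
            · positivity
            · rw [div_le_one hnpos]
              exact_mod_cast hkn
          have hd := hδ (ξ n k) (hξIcc k hkn) ((k:ℝ)/n) hkIcc
            (lt_of_le_of_lt (by rw [Real.dist_eq]; exact hnode k hkn) hsm)
          rw [Real.dist_eq] at hd
          exact hd.le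
        calc |∑ k ∈ Finset.range (n+1),
              (R' (ξ n k) * ((n.choose k : ℝ) * (q^k * (1-q)^(n-k)))
                - R' ((k:ℝ)/n) * ((n.choose k : ℝ) * (q^k * (1-q)^(n-k))))|
            ≤ ∑ k ∈ Finset.range (n+1),
              |R' (ξ n k) * ((n.choose k : ℝ) * (q^k * (1-q)^(n-k)))
                - R' ((k:ℝ)/n) * ((n.choose k : ℝ) * (q^k * (1-q)^(n-k)))| :=
              Finset.abs_sum_le_sum_abs _ _
          _ ≤ ∑ k ∈ Finset.range (n+1), (ε/3) * ((n.choose k : ℝ) * (q^k * (1-q)^(n-k))) :=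
              Finset.sum_le_sum hbnd
          _ = (ε/3) * ∑ k ∈ Finset.range (n+1), (n.choose k : ℝ) * (q^k * (1-q)^(n-k)) := by
              rw [Finset.mul_sum]
          _ = ε/3 := by rw [hone, mul_one]
      calc |S q - R' q| ≤ |S q - bernsteinApproximation n f ⟨q, hq⟩|
            + |bernsteinApproximation n f ⟨q, hq⟩ - R' q| := abs_sub_le _ _ _
        _ ≤ ε/3 + ε/3 := add_le_add hSB hBclose
    -- FTC for R
    have hp0 : (0:ℝ) ≤ p := hp.1
    have hsub01 : Set.Icc (0:ℝ) p ⊆ Set.Icc (0:ℝ) 1 := Set.Icc_subset_Icc le_rfl hp.2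
    have hRp : ∫ q in (0:ℝ)..p, R' q = R p := by
      rw [integral_eq_sub_of_hasDerivAt (f := R), hR0, sub_zero]
      · intro x hx
        rw [Set.uIcc_of_le hp0] at hx
        exact hderiv x (hsub01 hx)
      · apply ContinuousOn.intervalIntegrable
        rw [Set.uIcc_of_le hp0]
        exact hderivcont.mono hsub01
    -- conclusion
    rw [Real.dist_eq, hid]
    have hintR : IntervalIntegrable R' MeasureTheory.volume 0 p := by
      apply ContinuousOn.intervalIntegrable
      rw [Set.uIcc_of_le hp0]
      exact hderivcont.mono hsub01
    have hintS : IntervalIntegrable S MeasureTheory.volume 0 p := hScont.intervalIntegrable _ _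
    calc |R p - ∫ q in (0:ℝ)..p, S q|
        = |∫ q in (0:ℝ)..p, (R' q - S q)| := by
          rw [intervalIntegral.integral_sub hintR hintS, hRp]
      _ ≤ (ε/3 + ε/3) * |p - 0| := by
          rw [← Real.norm_eq_abs]
          apply intervalIntegral.norm_integral_le_of_norm_le_const
          intro x hx
          rw [Set.uIoc_of_le hp0] at hx
          have hxI : x ∈ Set.Icc (0:ℝ) 1 := ⟨hx.1.le, hx.2.trans hp.2⟩
          rw [Real.norm_eq_abs, abs_sub_comm]
          exact hdiff x hxI
      _ ≤ (ε/3 + ε/3) * 1 := by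
          apply mul_le_mul_of_nonneg_left _ (by linarith)
          rw [sub_zero, abs_of_nonneg hp0]
          exact hp.2
      _ < ε := by linarith
end

section
/- For the binormal model, AUC(μ,σ) = Φ(μ/√(1+σ²)), i.e. ∫₀¹ Φ(μ + σΦ^{-1}(p)) dp = Φ(μ/√(1+σ²)). -/
/-- The standard normal density. -/
noncomputable def stdNormalPDF (x : ℝ) : ℝ :=
  Real.exp (-x ^ 2 / 2) / Real.sqrt (2 * Real.pi)

/-- The standard normal CDF. -/
noncomputable def stdNormalCDF (x : ℝ) : ℝ :=
  ∫ t in Set.Iic x, stdNormalPDF t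

open Real MeasureTheory Set Function

lemma pdf_nonneg (x : ℝ) : 0 ≤ stdNormalPDF x := by
  unfold stdNormalPDF; positivity

lemma pdf_pos (x : ℝ) : 0 < stdNormalPDF x := by
  unfold stdNormalPDF
  exact div_pos (Real.exp_pos _) (Real.sqrt_pos.mpr (by positivity))

lemma pdf_cont : Continuous stdNormalPDF := by
  unfold stdNormalPDF; fun_prop

lemma pdf_eq : stdNormalPDF = fun x => Real.exp (-(1/2) * x ^ 2) * (Real.sqrt (2 * Real.pi))⁻¹ := by
  funext x; unfold stdNormalPDF; rw [div_eq_mul_inv]; ring_nf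

lemma pdf_integrable : Integrable stdNormalPDF := by
  rw [pdf_eq]
  exact (integrable_exp_neg_mul_sq (by norm_num)).mul_const _

lemma pdf_integral : ∫ x, stdNormalPDF x = 1 := by
  rw [pdf_eq]
  rw [integral_mul_const, integral_gaussian]
  rw [show (π / (1/2)) = 2 * π by ring]
  rw [mul_inv_cancel₀ (Real.sqrt_ne_zero'.mpr (by positivity))]

lemma cdf_hasDerivAt (x : ℝ) : HasDerivAt stdNormalCDF (stdNormalPDF x) x := by
  have h : ∀ y : ℝ, stdNormalCDF y = stdNormalCDF 0 + ∫ t in (0:ℝ)..y, stdNormalPDF t := by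
    intro y
    have := intervalIntegral.integral_Iic_sub_Iic (pdf_integrable.integrableOn)
      (pdf_integrable.integrableOn) (a := 0) (b := y)
    unfold stdNormalCDF
    linarith
  have H : HasDerivAt (fun y => stdNormalCDF 0 + ∫ t in (0:ℝ)..y, stdNormalPDF t)
      (stdNormalPDF x) x := by
    refine HasDerivAt.const_add _ ?_
    exact intervalIntegral.integral_hasDerivAt_right
      (pdf_integrable.intervalIntegrable)
      (pdf_cont.stronglyMeasurable.stronglyMeasurableAtFilter)
      (pdf_cont.continuousAt)
  rwa [show (fun y => stdNormalCDF 0 + ∫ t in (0:ℝ)..y, stdNormalPDF t) = stdNormalCDF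
    from funext fun y => (h y).symm] at H

lemma cdf_cont : Continuous stdNormalCDF :=
  continuous_iff_continuousAt.mpr fun x => (cdf_hasDerivAt x).continuousAt

lemma cdf_nonneg (x : ℝ) : 0 ≤ stdNormalCDF x :=
  setIntegral_nonneg measurableSet_Iic fun t _ => pdf_nonneg t

lemma cdf_le_one (x : ℝ) : stdNormalCDF x ≤ 1 := by
  rw [← pdf_integral]
  exact setIntegral_le_integral pdf_integrable (Filter.Eventually.of_forall pdf_nonneg)

lemma cdf_pos (x : ℝ) : 0 < stdNormalCDF x := by
  unfold stdNormalCDF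
  rw [setIntegral_pos_iff_support_of_nonneg_ae
    (Filter.Eventually.of_forall pdf_nonneg) pdf_integrable.integrableOn]
  have : Function.support stdNormalPDF = univ := by
    ext t; simp [Function.mem_support, (pdf_pos t).ne']
  rw [this, univ_inter]
  simp [Real.volume_Iic]

lemma cdf_lt_one (x : ℝ) : stdNormalCDF x < 1 := by
  have hcompl : stdNormalCDF x + ∫ t in Ioi x, stdNormalPDF t = 1 := by
    rw [← pdf_integral]
    have := integral_add_compl (measurableSet_Iic (a := x)) pdf_integrable
    rwa [compl_Iic] at this
  have hpos : 0 < ∫ t in Ioi x, stdNormalPDF t := by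
    rw [setIntegral_pos_iff_support_of_nonneg_ae
      (Filter.Eventually.of_forall pdf_nonneg) pdf_integrable.integrableOn]
    have : Function.support stdNormalPDF = univ := by
      ext t; simp [Function.mem_support, (pdf_pos t).ne']
    rw [this, univ_inter]
    simp [Real.volume_Ioi]
  linarith

lemma lemA (σ : ℝ) (hσ : 0 < σ) (a : ℝ) :
    ∫ t : ℝ, stdNormalPDF (a + σ * t) * stdNormalPDF t
      = stdNormalPDF (a / Real.sqrt (1 + σ ^ 2)) / Real.sqrt (1 + σ ^ 2) := by
  set v : ℝ := 1 + σ ^ 2 with hv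
  have hv0 : 0 < v := by positivity
  have h2π : (0:ℝ) < 2 * π := by positivity
  have key : ∀ t : ℝ, stdNormalPDF (a + σ * t) * stdNormalPDF t
      = Real.exp (-a ^ 2 / (2 * v)) / (2 * π)
        * Real.exp (-(v / 2) * (t + a * σ / v) ^ 2) := by
    intro t
    unfold stdNormalPDF
    rw [div_mul_div_comm, ← Real.exp_add, Real.mul_self_sqrt h2π.le,
        div_mul_eq_mul_div, ← Real.exp_add]
    congr 1
    congr 1
    field_simp
    ring
  calc ∫ t : ℝ, stdNormalPDF (a + σ * t) * stdNormalPDF t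
      = ∫ t : ℝ, Real.exp (-a ^ 2 / (2 * v)) / (2 * π)
          * Real.exp (-(v / 2) * (t + a * σ / v) ^ 2) := by simp_rw [key]
    _ = Real.exp (-a ^ 2 / (2 * v)) / (2 * π)
          * ∫ t : ℝ, Real.exp (-(v / 2) * (t + a * σ / v) ^ 2) :=
        integral_const_mul _ _
    _ = Real.exp (-a ^ 2 / (2 * v)) / (2 * π)
          * ∫ t : ℝ, Real.exp (-(v / 2) * t ^ 2) := by
        rw [integral_add_right_eq_self (fun t => Real.exp (-(v / 2) * t ^ 2)) (a * σ / v)]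
    _ = Real.exp (-a ^ 2 / (2 * v)) / (2 * π) * Real.sqrt (π / (v / 2)) := by
        rw [integral_gaussian]
    _ = stdNormalPDF (a / Real.sqrt v) / Real.sqrt v := by
        unfold stdNormalPDF
        rw [div_pow, Real.sq_sqrt hv0.le,
          show π / (v / 2) = (2 * π) / v by field_simp,
          Real.sqrt_div h2π.le v]
        rw [show (2:ℝ) * π = Real.sqrt (2*π) * Real.sqrt (2*π) from (Real.mul_self_sqrt h2π.le).symm]
        have hs2π : Real.sqrt (2*π) ≠ 0 := Real.sqrt_ne_zero'.mpr h2π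
        have hsv : Real.sqrt v ≠ 0 := Real.sqrt_ne_zero'.mpr hv0
        field_simp
        rw [Real.sq_sqrt (by positivity)]

lemma cdf_shift (c : ℝ) :
    ∫ s in Iic (0:ℝ), stdNormalPDF (s + c) = stdNormalCDF c := by
  unfold stdNormalCDF
  rw [← integral_indicator measurableSet_Iic, ← integral_indicator measurableSet_Iic,
    ← integral_add_right_eq_self (Set.indicator (Iic c) stdNormalPDF) c]
  congr 1
  funext s
  by_cases h : s ≤ 0
  · simp [Set.indicator_apply, h, add_le_iff_nonpos_left.mpr h, mem_Iic]
  · simp [Set.indicator_apply, h, mem_Iic, fun hh => h (add_le_iff_nonpos_left.mp hh)]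

lemma keylem (μ σ : ℝ) (hσ : 0 < σ) :
    ∫ t : ℝ, stdNormalCDF (μ + σ * t) * stdNormalPDF t
      = stdNormalCDF (μ / Real.sqrt (1 + σ ^ 2)) := by
  set τ : ℝ := Real.sqrt (1 + σ ^ 2) with hτdef
  have hτ : 0 < τ := Real.sqrt_pos.mpr (by positivity)
  set f : ℝ → ℝ → ℝ := fun t s =>
    Set.indicator (Iic (0:ℝ)) (fun s => stdNormalPDF (s + (μ + σ * t)) * stdNormalPDF t) s
    with hf
  have h1 : ∀ t : ℝ, stdNormalCDF (μ + σ * t) * stdNormalPDF t = ∫ s : ℝ, f t s := by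
    intro t
    rw [hf]
    simp only
    rw [integral_indicator measurableSet_Iic, integral_mul_const, cdf_shift]
  have hft : ∀ t : ℝ, Integrable (f t) := by
    intro t
    exact ((pdf_integrable.comp_add_right (μ + σ * t)).mul_const _).indicator measurableSet_Iic
  have hufeq : uncurry f = Set.indicator {p : ℝ × ℝ | p.2 ≤ 0}
      (fun p => stdNormalPDF (p.2 + (μ + σ * p.1)) * stdNormalPDF p.1) := by
    funext p
    rcases p with ⟨t, s⟩
    simp [uncurry, hf, Set.indicator_apply, mem_Iic]
  have hmeas : AEStronglyMeasurable (uncurry f) (volume.prod volume) := by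
    rw [hufeq]
    refine (Measurable.indicator ?_ ?_).aestronglyMeasurable
    · exact ((pdf_cont.measurable.comp (by fun_prop)).mul
        (pdf_cont.measurable.comp measurable_fst))
    · exact measurable_snd measurableSet_Iic
  have hint : Integrable (uncurry f) (volume.prod volume) := by
    rw [integrable_prod_iff hmeas]
    refine ⟨Filter.Eventually.of_forall fun t => hft t, ?_⟩
    have heq : (fun t => ∫ s : ℝ, ‖uncurry f (t, s)‖)
        = fun t => stdNormalCDF (μ + σ * t) * stdNormalPDF t := by
      funext t
      simp only [uncurry_apply_pair]
      rw [h1 t]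
      congr 1
      funext s
      rw [Real.norm_of_nonneg]
      exact Set.indicator_nonneg (fun s _ => mul_nonneg (pdf_nonneg _) (pdf_nonneg _)) s
    rw [heq]
    refine pdf_integrable.mono ?_ (Filter.Eventually.of_forall fun t => ?_)
    · exact ((cdf_cont.comp (by fun_prop)).mul pdf_cont).aestronglyMeasurable
    · rw [Real.norm_of_nonneg (mul_nonneg (cdf_nonneg _) (pdf_nonneg _)),
        Real.norm_of_nonneg (pdf_nonneg _)]
      nlinarith [cdf_nonneg (μ + σ * t), cdf_le_one (μ + σ * t), pdf_nonneg t]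
  calc ∫ t : ℝ, stdNormalCDF (μ + σ * t) * stdNormalPDF t
      = ∫ t : ℝ, ∫ s : ℝ, f t s := by simp_rw [h1]
    _ = ∫ s : ℝ, ∫ t : ℝ, f t s := integral_integral_swap hint
    _ = ∫ s : ℝ, Set.indicator (Iic (0:ℝ))
          (fun s => stdNormalPDF ((s + μ) / τ) / τ) s := by
        congr 1
        funext s
        by_cases hs : s ≤ 0
        · simp only [hf, Set.indicator_of_mem (mem_Iic.mpr hs)]
          rw [hτdef, ← lemA σ hσ (s + μ)]
          congr 1
          funext t
          rw [add_assoc]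
        · simp only [hf, Set.indicator_of_notMem (show s ∉ Iic (0:ℝ) by simpa using hs)]
          exact integral_zero _ _
    _ = stdNormalCDF (μ / τ) := by
        set M : ℝ → ℝ := Set.indicator (Iic μ) (fun u => stdNormalPDF (u / τ) / τ) with hM
        have hMs : ∀ s : ℝ, Set.indicator (Iic (0:ℝ))
            (fun s => stdNormalPDF ((s + μ) / τ) / τ) s = M (s + μ) := by
          intro s
          by_cases hs : s ≤ 0
          · rw [Set.indicator_of_mem (mem_Iic.mpr hs), hM,
              Set.indicator_of_mem (mem_Iic.mpr (by linarith))]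
          · rw [Set.indicator_of_notMem (show s ∉ Iic (0:ℝ) by simpa using hs), hM,
              Set.indicator_of_notMem (show s + μ ∉ Iic μ by simp; linarith [not_le.mp hs])]
        have hMc : ∀ x : ℝ, M (τ * x) = Set.indicator (Iic (μ / τ)) stdNormalPDF x / τ := by
          intro x
          by_cases h : x ≤ μ / τ
          · rw [hM, Set.indicator_of_mem (mem_Iic.mpr
                (by rw [mul_comm]; exact (le_div_iff₀ hτ).mp h)),
              Set.indicator_of_mem (mem_Iic.mpr h), mul_div_cancel_left₀ _ hτ.ne']
          · rw [hM, Set.indicator_of_notMem (show τ * x ∉ Iic μ by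
                simp only [mem_Iic, not_le] at *
                rw [mul_comm]
                exact (div_lt_iff₀ hτ).mp h),
              Set.indicator_of_notMem (by simpa using h), zero_div]
        have hcomp := MeasureTheory.Measure.integral_comp_mul_left M τ
        simp_rw [hMs]
        rw [integral_add_right_eq_self M μ]
        have h7 : stdNormalCDF (μ / τ) / τ = |τ⁻¹| • ∫ y : ℝ, M y := by
          rw [← hcomp]
          simp_rw [hMc]
          rw [integral_div, integral_indicator measurableSet_Iic]
          rfl
        rw [abs_of_pos (inv_pos.mpr hτ), smul_eq_mul] at h7
        field_simp at h7
        linarith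

/-- for the binormal model,
`∫₀¹ Φ(μ + σ Φ⁻¹(p)) dp = Φ(μ/√(1+σ²))`. -/
theorem binormal_auc (μ σ : ℝ) (hσ : 0 < σ)
    (Φinv : ℝ → ℝ)
    (hinv : ∀ p ∈ Set.Ioo (0:ℝ) 1, stdNormalCDF (Φinv p) = p)
    (hinv' : ∀ x : ℝ, Φinv (stdNormalCDF x) = x) :
    ∫ p in (0:ℝ)..1, stdNormalCDF (μ + σ * Φinv p) =
      stdNormalCDF (μ / Real.sqrt (1 + σ ^ 2)) := by
  have himg : stdNormalCDF '' univ = Ioo 0 1 := by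
    apply Subset.antisymm
    · rintro _ ⟨x, -, rfl⟩
      exact ⟨cdf_pos x, cdf_lt_one x⟩
    · intro p hp
      exact ⟨Φinv p, trivial, hinv p hp⟩
  have hInj : InjOn stdNormalCDF univ := fun x _ y _ h => by
    have := congrArg Φinv h
    rwa [hinv', hinv'] at this
  have hderiv : ∀ x ∈ univ, HasDerivWithinAt stdNormalCDF (stdNormalPDF x) univ x :=
    fun x _ => (cdf_hasDerivAt x).hasDerivWithinAt
  have hsub := integral_image_eq_integral_abs_deriv_smul MeasurableSet.univ hderiv hInj
    (fun p => stdNormalCDF (μ + σ * Φinv p))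
  rw [himg, Measure.restrict_univ] at hsub
  rw [intervalIntegral.integral_of_le zero_le_one, integral_Ioc_eq_integral_Ioo, hsub]
  rw [← keylem μ σ hσ]
  congr 1
  funext x
  rw [hinv', abs_of_nonneg (pdf_nonneg x), smul_eq_mul, mul_comm]
end
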